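/- Let H be a separable real Hilbert space with orthonormal basis (h_n)_{n≥1}, let E, F, G be real Banach spaces, and let (γ_n)_{n≥1} be a sequence of independent standard real Gaussian random variables on a probability space (Ω,F,P). Suppose R : H → E and S : H → F are bounded linear operators such that the Gaussian sums ∑_{n≥1} γ_n R h_n and ∑_{n≥1} γ_n S h_n converge in L²(Ω;E) and L²(Ω;F) respectively, and let T : E → L(F,G) be a bounded linear operator (i.e., a bounded bilinear map E × F → G). Then the series ∑_{n≥1} (T(R h_n))(S h_n) converges in G. -/

import Mathlib

open MeasureTheory ProbabilityTheory Filter Real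

section GaussAux

lemma aux_sq_integrable : Integrable (fun x : ℝ => x ^ 2) (gaussianReal 0 1) := by
  rw [gaussianReal_of_var_ne_zero _ one_ne_zero,
    integrable_withDensity_iff (measurable_gaussianPDF _ _)
      (ae_of_all _ fun x => ENNReal.ofReal_lt_top)]
  have key : Integrable (fun x : ℝ => x ^ (2:ℝ) * rexp (-(2:ℝ)⁻¹ * x ^ 2)) :=
    integrable_rpow_mul_exp_neg_mul_sq (by norm_num) (by norm_num)
  have h2 : Integrable (fun x : ℝ => (√(2 * π * (1:NNReal)))⁻¹ * (x ^ (2:ℝ) * rexp (-(2:ℝ)⁻¹ * x ^ 2))) :=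
    key.const_mul _
  refine h2.congr (ae_of_all _ fun x => ?_)
  simp only [gaussianPDF_def]
  rw [ENNReal.toReal_ofReal (gaussianPDFReal_nonneg _ _ _), gaussianPDFReal]
  norm_num
  ring_nf

lemma aux_memL2 : MemLp (id : ℝ → ℝ) 2 (gaussianReal 0 1) :=
  (memLp_two_iff_integrable_sq aestronglyMeasurable_id).2 aux_sq_integrable

lemma aux_mean_zero : ∫ x, x ∂(gaussianReal 0 1) = 0 := by
  have hmap : Measure.map (fun x : ℝ => (-1 : ℝ) * x) (gaussianReal 0 1) = gaussianReal 0 1 := by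
    rw [gaussianReal_map_const_mul (-1 : ℝ)]
    norm_num
  have h1 : ∫ x, x ∂(gaussianReal 0 1)
      = ∫ x, (-1 : ℝ) * x ∂(gaussianReal 0 1) := by
    conv_lhs => rw [← hmap]
    rw [integral_map (f := fun x : ℝ => x) (φ := fun x : ℝ => (-1:ℝ) * x)
      (by fun_prop) aestronglyMeasurable_id]
  have h2 : ∫ x, (-1:ℝ) * x ∂(gaussianReal 0 1) = - ∫ x, x ∂(gaussianReal 0 1) := by
    rw [integral_const_mul]; ring
  linarith [h1, h2]

lemma aux_sq_pos : 0 < ∫ x, x ^ 2 ∂(gaussianReal 0 1) := by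
  rw [integral_pos_iff_support_of_nonneg_ae (ae_of_all _ fun x => sq_nonneg x) aux_sq_integrable]
  have hsupp : Function.support (fun x : ℝ => x ^ 2) = {(0:ℝ)}ᶜ := by
    ext x; simp [Function.mem_support, pow_eq_zero_iff]
  rw [hsupp]
  have h0 : (gaussianReal 0 1) {(0:ℝ)} = 0 :=
    gaussianReal_absolutelyContinuous _ one_ne_zero (measure_singleton 0)
  have := measure_compl (μ := gaussianReal 0 1) (measurableSet_singleton (0:ℝ)) (by simp [h0])
  rw [this, h0]
  simp

end GaussAux

section BilinAux

variable {E F G Ω : Type*}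
    [NormedAddCommGroup E] [NormedSpace ℝ E] [CompleteSpace E]
    [NormedAddCommGroup F] [NormedSpace ℝ F] [CompleteSpace F]
    [NormedAddCommGroup G] [NormedSpace ℝ G] [CompleteSpace G]
    [MeasurableSpace Ω] {P : Measure Ω}

lemma aux_norm_mul_integrable (f : Ω → E) (g : Ω → F)
    (hf : MemLp f 2 P) (hg : MemLp g 2 P) :
    Integrable (fun ω => ‖f ω‖ * ‖g ω‖) P := by
  have h : MemLp ((fun ω => ‖f ω‖) • (fun ω => ‖g ω‖)) 1 P :=
    hg.norm.smul hf.norm (hpqr := ⟨by simp only [one_div, ENNReal.inv_two_add_inv_two, inv_one]⟩)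
  exact memLp_one_iff_integrable.1 h

lemma aux_bilin_integrable (T : E →L[ℝ] F →L[ℝ] G) (f : Ω → E) (g : Ω → F)
    (hf : MemLp f 2 P) (hg : MemLp g 2 P) :
    Integrable (fun ω => T (f ω) (g ω)) P := by
  refine Integrable.mono' ((aux_norm_mul_integrable f g hf hg).const_mul ‖T‖) ?_
    (ae_of_all _ fun ω => ?_)
  · exact T.continuous₂.comp_aestronglyMeasurable (hf.1.prodMk hg.1)
  · calc ‖T (f ω) (g ω)‖ ≤ ‖T‖ * ‖f ω‖ * ‖g ω‖ := T.le_opNorm₂ _ _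
      _ = ‖T‖ * (‖f ω‖ * ‖g ω‖) := by ring

lemma aux_integral_norm_mul_le (f : Ω → E) (g : Ω → F)
    (hf : MemLp f 2 P) (hg : MemLp g 2 P) :
    ∫ ω, ‖f ω‖ * ‖g ω‖ ∂P ≤ (eLpNorm f 2 P).toReal * (eLpNorm g 2 P).toReal := by
  set u : Lp ℝ 2 P := hf.norm.toLp _
  set v : Lp ℝ 2 P := hg.norm.toLp _
  have h1 : ∫ ω, ‖f ω‖ * ‖g ω‖ ∂P = (inner ℝ u v : ℝ) := by
    rw [L2.inner_def]
    refine integral_congr_ae ?_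
    filter_upwards [hf.norm.coeFn_toLp, hg.norm.coeFn_toLp] with ω h1 h2
    simp [u, v, h1, h2, real_inner_comm]
    ring
  rw [h1]
  calc (inner ℝ u v : ℝ) ≤ ‖u‖ * ‖v‖ := real_inner_le_norm u v
    _ = (eLpNorm f 2 P).toReal * (eLpNorm g 2 P).toReal := by
        rw [Lp.norm_toLp, Lp.norm_toLp, eLpNorm_norm, eLpNorm_norm]

lemma aux_norm_integral_bilin_le (T : E →L[ℝ] F →L[ℝ] G) (f : Ω → E) (g : Ω → F)
    (hf : MemLp f 2 P) (hg : MemLp g 2 P) :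
    ‖∫ ω, T (f ω) (g ω) ∂P‖ ≤ ‖T‖ * ((eLpNorm f 2 P).toReal * (eLpNorm g 2 P).toReal) := by
  calc ‖∫ ω, T (f ω) (g ω) ∂P‖ ≤ ∫ ω, ‖T (f ω) (g ω)‖ ∂P :=
        norm_integral_le_integral_norm _
    _ ≤ ∫ ω, ‖T‖ * (‖f ω‖ * ‖g ω‖) ∂P := by
        refine integral_mono_of_nonneg (ae_of_all _ fun ω => norm_nonneg _)
          ((aux_norm_mul_integrable f g hf hg).const_mul ‖T‖) (ae_of_all _ fun ω => ?_)
        calc ‖T (f ω) (g ω)‖ ≤ ‖T‖ * ‖f ω‖ * ‖g ω‖ := T.le_opNorm₂ _ _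
          _ = ‖T‖ * (‖f ω‖ * ‖g ω‖) := by ring
    _ = ‖T‖ * ∫ ω, ‖f ω‖ * ‖g ω‖ ∂P := integral_const_mul _ _
    _ ≤ ‖T‖ * ((eLpNorm f 2 P).toReal * (eLpNorm g 2 P).toReal) :=
        mul_le_mul_of_nonneg_left (aux_integral_norm_mul_le f g hf hg) (norm_nonneg T)

end BilinAux

/-- If `R : H → E` and `S : H → F` are γ-radonifying with respect to the
orthonormal basis `(h_n)` (i.e. the Gaussian sums converge in `L²(Ω;E)`, resp. `L²(Ω;F)`),
and `T : E → L(F,G)` is a bounded bilinear map, then the series `∑ (T (R h_n)) (S h_n)`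
converges in `G`. -/
theorem trace_series_converges
    {H E F G Ω : Type*}
    [NormedAddCommGroup H] [InnerProductSpace ℝ H] [CompleteSpace H]
    [NormedAddCommGroup E] [NormedSpace ℝ E] [CompleteSpace E]
    [NormedAddCommGroup F] [NormedSpace ℝ F] [CompleteSpace F]
    [NormedAddCommGroup G] [NormedSpace ℝ G] [CompleteSpace G]
    [MeasurableSpace Ω] {P : Measure Ω} [IsProbabilityMeasure P]
    (h : HilbertBasis ℕ ℝ H)
    (γ : ℕ → Ω → ℝ) (hγmeas : ∀ n, Measurable (γ n))
    (hγindep : iIndepFun γ P)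
    (hγdist : ∀ n, Measure.map (γ n) P = gaussianReal 0 1)
    (R : H →L[ℝ] E) (S : H →L[ℝ] F)
    (ξR : Ω → E) (hξR : MemLp ξR 2 P)
    (hRconv : Tendsto
      (fun N => eLpNorm (fun ω => (∑ n ∈ Finset.range N, γ n ω • R (h n)) - ξR ω) 2 P)
      atTop (nhds 0))
    (ξS : Ω → F) (hξS : MemLp ξS 2 P)
    (hSconv : Tendsto
      (fun N => eLpNorm (fun ω => (∑ n ∈ Finset.range N, γ n ω • S (h n)) - ξS ω) 2 P)
      atTop (nhds 0))
    (T : E →L[ℝ] F →L[ℝ] G) :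
    ∃ g : G, Tendsto (fun N => ∑ n ∈ Finset.range N, T (R (h n)) (S (h n)))
      atTop (nhds g) := by
  classical
  have hγaem : ∀ n, AEMeasurable (γ n) P := fun n => (hγmeas n).aemeasurable
  -- γ n is in L²
  have hγ2 : ∀ n, MemLp (γ n) 2 P := by
    intro n
    have h1 : MemLp ((id : ℝ → ℝ) ∘ γ n) 2 P := by
      rw [← memLp_map_measure_iff aestronglyMeasurable_id (hγaem n), hγdist n]
      exact aux_memL2
    simpa [Function.comp] using h1
  -- first moment
  have hEγ : ∀ n, ∫ ω, γ n ω ∂P = 0 := by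
    intro n
    have h1 : ∫ x, x ∂(Measure.map (γ n) P) = ∫ ω, γ n ω ∂P :=
      integral_map (hγaem n) aestronglyMeasurable_id
    rw [hγdist n, aux_mean_zero] at h1
    exact h1.symm
  -- second moment
  set c : ℝ := ∫ x, x ^ 2 ∂(gaussianReal 0 1) with hc_def
  have hc : 0 < c := aux_sq_pos
  have hEγ2 : ∀ n, ∫ ω, γ n ω * γ n ω ∂P = c := by
    intro n
    have h1 : ∫ x, x ^ 2 ∂(Measure.map (γ n) P) = ∫ ω, γ n ω ^ 2 ∂P :=
      integral_map (hγaem n) ((continuous_pow 2).aestronglyMeasurable)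
    rw [hγdist n] at h1
    rw [← hc_def] at h1
    rw [h1]
    exact integral_congr_ae (ae_of_all _ fun ω => by ring)
  -- cross moments vanish
  have hcross : ∀ m n, m ≠ n → ∫ ω, γ m ω * γ n ω ∂P = 0 := by
    intro m n hmn
    have h1 := (hγindep.indepFun hmn).integral_mul_eq_mul_integral (hγ2 m).1 (hγ2 n).1
    have h2 : ∫ ω, γ m ω * γ n ω ∂P = ∫ ω, (γ m * γ n) ω ∂P := rfl
    rw [h2, h1, hEγ m, hEγ n, mul_zero]
  -- the partial-sum random variables are in L²
  have hX : ∀ N, MemLp (fun ω => ∑ n ∈ Finset.range N, γ n ω • R (h n)) 2 P := by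
    intro N
    apply memLp_finset_sum
    intro n _
    exact (memLp_top_const (R (h n))).smul (hγ2 n)
  have hY : ∀ N, MemLp (fun ω => ∑ n ∈ Finset.range N, γ n ω • S (h n)) 2 P := by
    intro N
    apply memLp_finset_sum
    intro n _
    exact (memLp_top_const (S (h n))).smul (hγ2 n)
  -- products γ m * γ n are integrable
  have hmul_int : ∀ m n, Integrable (fun ω => γ m ω * γ n ω) P := by
    intro m n
    have h1 : MemLp ((γ m) • (γ n)) 1 P :=
      (hγ2 n).smul (hγ2 m) (hpqr := ⟨by simp only [one_div, ENNReal.inv_two_add_inv_two, inv_one]⟩)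
    exact memLp_one_iff_integrable.1 h1
  -- Step 1: the integral identity
  have key1 : ∀ N, ∫ ω, T (∑ n ∈ Finset.range N, γ n ω • R (h n))
        (∑ n ∈ Finset.range N, γ n ω • S (h n)) ∂P
      = c • ∑ n ∈ Finset.range N, T (R (h n)) (S (h n)) := by
    intro N
    have hexp : ∀ ω, T (∑ n ∈ Finset.range N, γ n ω • R (h n))
          (∑ n ∈ Finset.range N, γ n ω • S (h n))
        = ∑ m ∈ Finset.range N, ∑ n ∈ Finset.range N,
            (γ m ω * γ n ω) • T (R (h m)) (S (h n)) := by
      intro ω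
      simp only [map_sum, ContinuousLinearMap.sum_apply]
      rw [Finset.sum_comm]
      refine Finset.sum_congr rfl fun m _ => Finset.sum_congr rfl fun n _ => ?_
      rw [ContinuousLinearMap.map_smul₂, (T _).map_smul, smul_smul]
    have hterm_int : ∀ m n, Integrable
        (fun ω => (γ m ω * γ n ω) • T (R (h m)) (S (h n))) P :=
      fun m n => (hmul_int m n).smul_const _
    calc ∫ ω, T (∑ n ∈ Finset.range N, γ n ω • R (h n))
          (∑ n ∈ Finset.range N, γ n ω • S (h n)) ∂P
        = ∫ ω, ∑ m ∈ Finset.range N, ∑ n ∈ Finset.range N,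
            (γ m ω * γ n ω) • T (R (h m)) (S (h n)) ∂P := by
          exact integral_congr_ae (ae_of_all _ hexp)
      _ = ∑ m ∈ Finset.range N, ∑ n ∈ Finset.range N,
            ∫ ω, (γ m ω * γ n ω) • T (R (h m)) (S (h n)) ∂P := by
          rw [integral_finset_sum _ fun m _ => integrable_finset_sum _ fun n _ => hterm_int m n]
          exact Finset.sum_congr rfl fun m _ => integral_finset_sum _ fun n _ => hterm_int m n
      _ = ∑ m ∈ Finset.range N, ∑ n ∈ Finset.range N,
            (∫ ω, γ m ω * γ n ω ∂P) • T (R (h m)) (S (h n)) := by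
          refine Finset.sum_congr rfl fun m _ => Finset.sum_congr rfl fun n _ => ?_
          exact integral_smul_const _ _
      _ = ∑ m ∈ Finset.range N, c • T (R (h m)) (S (h m)) := by
          refine Finset.sum_congr rfl fun m hm => ?_
          rw [Finset.sum_eq_single_of_mem m hm]
          · rw [hEγ2 m]
          · intro n _ hne
            rw [hcross m n (Ne.symm hne), zero_smul]
      _ = c • ∑ n ∈ Finset.range N, T (R (h n)) (S (h n)) := (Finset.smul_sum).symm
  -- Step 2: convergence of the integrals
  set g0 : G := ∫ ω, T (ξR ω) (ξS ω) ∂P with hg0_def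
  have haN : Tendsto (fun N =>
      (eLpNorm (fun ω => (∑ n ∈ Finset.range N, γ n ω • R (h n)) - ξR ω) 2 P).toReal)
      atTop (nhds 0) := by
    have := (ENNReal.tendsto_toReal (by simp : (0:ENNReal) ≠ ⊤)).comp hRconv
    exact this
  have hcN : Tendsto (fun N =>
      (eLpNorm (fun ω => (∑ n ∈ Finset.range N, γ n ω • S (h n)) - ξS ω) 2 P).toReal)
      atTop (nhds 0) := by
    have := (ENNReal.tendsto_toReal (by simp : (0:ENNReal) ≠ ⊤)).comp hSconv
    exact this
  set K : ℝ := (eLpNorm ξS 2 P).toReal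
  set K' : ℝ := (eLpNorm ξR 2 P).toReal
  have key2 : Tendsto (fun N => ∫ ω, T (∑ n ∈ Finset.range N, γ n ω • R (h n))
      (∑ n ∈ Finset.range N, γ n ω • S (h n)) ∂P) atTop (nhds g0) := by
    rw [tendsto_iff_norm_sub_tendsto_zero]
    have hbound : ∀ N, ‖(∫ ω, T (∑ n ∈ Finset.range N, γ n ω • R (h n))
          (∑ n ∈ Finset.range N, γ n ω • S (h n)) ∂P) - g0‖
        ≤ ‖T‖ * ((eLpNorm (fun ω => (∑ n ∈ Finset.range N, γ n ω • R (h n)) - ξR ω) 2 P).toReal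
            * ((eLpNorm (fun ω => (∑ n ∈ Finset.range N, γ n ω • S (h n)) - ξS ω) 2 P).toReal + K))
          + ‖T‖ * (K' * (eLpNorm (fun ω => (∑ n ∈ Finset.range N, γ n ω • S (h n)) - ξS ω) 2 P).toReal) := by
      intro N
      have hXd : MemLp (fun ω => (∑ n ∈ Finset.range N, γ n ω • R (h n)) - ξR ω) 2 P :=
        (hX N).sub hξR
      have hYd : MemLp (fun ω => (∑ n ∈ Finset.range N, γ n ω • S (h n)) - ξS ω) 2 P :=
        (hY N).sub hξS
      have hsplit : (∫ ω, T (∑ n ∈ Finset.range N, γ n ω • R (h n))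
            (∑ n ∈ Finset.range N, γ n ω • S (h n)) ∂P) - g0
          = (∫ ω, T ((∑ n ∈ Finset.range N, γ n ω • R (h n)) - ξR ω)
              (∑ n ∈ Finset.range N, γ n ω • S (h n)) ∂P)
            + ∫ ω, T (ξR ω) ((∑ n ∈ Finset.range N, γ n ω • S (h n)) - ξS ω) ∂P := by
        rw [hg0_def,
          ← integral_add (aux_bilin_integrable T _ _ hXd (hY N))
            (aux_bilin_integrable T _ _ hξR hYd),
          ← integral_sub (aux_bilin_integrable T _ _ (hX N) (hY N))
            (aux_bilin_integrable T _ _ hξR hξS)]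
        refine integral_congr_ae (ae_of_all _ fun ω => ?_)
        simp only [map_sub, ContinuousLinearMap.sub_apply]
        abel
      rw [hsplit]
      refine (norm_add_le _ _).trans (add_le_add ?_ ?_)
      · refine (aux_norm_integral_bilin_le T _ _ hXd (hY N)).trans ?_
        refine mul_le_mul_of_nonneg_left ?_ (norm_nonneg T)
        refine mul_le_mul_of_nonneg_left ?_ ENNReal.toReal_nonneg
        -- eLpNorm Y_N ≤ eLpNorm (Y_N - ξS) + eLpNorm ξS  (toReal version)
        have htri : eLpNorm (fun ω => ∑ n ∈ Finset.range N, γ n ω • S (h n)) 2 P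
            ≤ eLpNorm (fun ω => (∑ n ∈ Finset.range N, γ n ω • S (h n)) - ξS ω) 2 P
              + eLpNorm ξS 2 P := by
          have heq : (fun ω => ∑ n ∈ Finset.range N, γ n ω • S (h n))
              = fun ω => ((∑ n ∈ Finset.range N, γ n ω • S (h n)) - ξS ω) + ξS ω := by
            funext ω; abel
          rw [heq]
          exact eLpNorm_add_le hYd.1 hξS.1 (by norm_num)
        calc (eLpNorm (fun ω => ∑ n ∈ Finset.range N, γ n ω • S (h n)) 2 P).toReal
            ≤ (eLpNorm (fun ω => (∑ n ∈ Finset.range N, γ n ω • S (h n)) - ξS ω) 2 P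
                + eLpNorm ξS 2 P).toReal := by
              exact ENNReal.toReal_mono (ENNReal.add_ne_top.2 ⟨hYd.2.ne, hξS.2.ne⟩) htri
          _ = _ := ENNReal.toReal_add hYd.2.ne hξS.2.ne
      · exact aux_norm_integral_bilin_le T _ _ hξR hYd
    have hlim : Tendsto (fun N =>
        ‖T‖ * ((eLpNorm (fun ω => (∑ n ∈ Finset.range N, γ n ω • R (h n)) - ξR ω) 2 P).toReal
            * ((eLpNorm (fun ω => (∑ n ∈ Finset.range N, γ n ω • S (h n)) - ξS ω) 2 P).toReal + K))
          + ‖T‖ * (K' * (eLpNorm (fun ω => (∑ n ∈ Finset.range N, γ n ω • S (h n)) - ξS ω) 2 P).toReal))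
        atTop (nhds 0) := by
      have h1 := (tendsto_const_nhds (x := ‖T‖) (f := atTop)).mul
        (haN.mul (hcN.add (tendsto_const_nhds (x := K))))
      have h2 := (tendsto_const_nhds (x := ‖T‖) (f := atTop)).mul
        ((tendsto_const_nhds (x := K') (f := atTop)).mul hcN)
      have := h1.add h2
      simpa using this
    exact squeeze_zero (fun N => norm_nonneg _) hbound hlim
  -- combine
  refine ⟨c⁻¹ • g0, ?_⟩
  have h3 : Tendsto (fun N => c • ∑ n ∈ Finset.range N, T (R (h n)) (S (h n)))
      atTop (nhds g0) := by
    simpa only [key1] using key2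
  have h4 := h3.const_smul c⁻¹
  simpa [smul_smul, inv_mul_cancel₀ hc.ne', one_smul] using h4
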